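/- (Correctness of the fuzzing engine's violation check.) For every quantitative STL formula Φ over S, every trace π : ℕ → S, and every formula ξ ∈ Θ(Φ): if ρ(ξ,π,0) > 0 then it is not the case that (π,0) ⊨ Φ. That is, a strictly positive robustness score for any member of Θ(Φ) certifies that the trace violates the traffic law Φ. -/
import Mathlib


/-- Quantitative STL formulas over a type `S` of scenes: atoms carry a
real-valued function, and the bounded temporal operators carry bounds
`a b : ℕ` together with a proof that `a ≤ b`. -/
inductive QSTL (S : Type) : Type where
  | atom : (S → ℝ) → QSTL S
  | neg : QSTL S → QSTL S
  | conj : QSTL S → QSTL S → QSTL S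
  | disj : QSTL S → QSTL S → QSTL S
  | untl : (a b : ℕ) → a ≤ b → QSTL S → QSTL S → QSTL S
  | always : (a b : ℕ) → a ≤ b → QSTL S → QSTL S
  | eventually : (a b : ℕ) → a ≤ b → QSTL S → QSTL S
  | next : QSTL S → QSTL S

/-- Satisfaction `(π, t) ⊨ φ`. -/
def QSTL.Sat {S : Type} (π : ℕ → S) : ℕ → QSTL S → Prop
  | t, .atom g => g (π t) > 0
  | t, .neg φ => ¬ QSTL.Sat π t φ
  | t, .conj φ ψ => QSTL.Sat π t φ ∧ QSTL.Sat π t ψ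
  | t, .disj φ ψ => QSTL.Sat π t φ ∨ QSTL.Sat π t ψ
  | t, .untl a b _ φ ψ =>
      ∃ t', t + a ≤ t' ∧ t' ≤ t + b ∧ QSTL.Sat π t' ψ ∧
        ∀ t'', t ≤ t'' → t'' ≤ t' → QSTL.Sat π t'' φ
  | t, .always a b _ φ => ∀ t', t + a ≤ t' → t' ≤ t + b → QSTL.Sat π t' φ
  | t, .eventually a b _ φ => ∃ t', t + a ≤ t' ∧ t' ≤ t + b ∧ QSTL.Sat π t' φ
  | t, .next φ => QSTL.Sat π (t + 1) φ

/-- The robustness `ρ(φ, π, t)` of the quantitative semantics. -/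
def QSTL.rho {S : Type} (π : ℕ → S) : QSTL S → ℕ → ℝ
  | .atom g, t => g (π t)
  | .neg φ, t => - QSTL.rho π φ t
  | .conj φ ψ, t => min (QSTL.rho π φ t) (QSTL.rho π ψ t)
  | .disj φ ψ, t => max (QSTL.rho π φ t) (QSTL.rho π ψ t)
  | .untl a b h φ ψ, t =>
      (Finset.Icc (t + a) (t + b)).attach.sup'
        (Finset.attach_nonempty_iff.mpr
          (Finset.nonempty_Icc.mpr (Nat.add_le_add_left h t)))
        (fun t' => min (QSTL.rho π ψ t'.1)
          ((Finset.Icc t t'.1).inf'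
            (Finset.nonempty_Icc.mpr
              (le_trans (Nat.le_add_right t a) (Finset.mem_Icc.mp t'.2).1))
            (fun t'' => QSTL.rho π φ t'')))
  | .always a b h φ, t =>
      (Finset.Icc (t + a) (t + b)).inf'
        (Finset.nonempty_Icc.mpr (Nat.add_le_add_left h t))
        (fun t' => QSTL.rho π φ t')
  | .eventually a b h φ, t =>
      (Finset.Icc (t + a) (t + b)).sup'
        (Finset.nonempty_Icc.mpr (Nat.add_le_add_left h t))
        (fun t' => QSTL.rho π φ t')
  | .next φ, t => QSTL.rho π φ (t + 1)

mutual
/-- `Theta Φ`: the set of formulas describing different ways of violating `Φ`.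
(In the until case, `Θ(¬φ₁ ∨ φ₂)` and `Θ(φ₁ ∨ φ₂)` are unfolded via the
defining equations `Θ(¬φ₁ ∨ φ₂) = {x ∧ y : x ∈ N(φ₁), y ∈ Θ(φ₂)}` and
`Θ(φ₁ ∨ φ₂) = {x ∧ y : x ∈ Θ(φ₁), y ∈ Θ(φ₂)}`.) -/
def QSTL.Theta {S : Type} : QSTL S → Set (QSTL S)
  | .atom g => {QSTL.neg (QSTL.atom g)}
  | .conj φ ψ => QSTL.Theta φ ∪ QSTL.Theta ψ
  | .disj φ ψ => {ξ | ∃ x ∈ QSTL.Theta φ, ∃ y ∈ QSTL.Theta ψ, ξ = QSTL.conj x y}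
  | .neg φ => QSTL.NSat φ
  | .untl a b h φ ψ =>
      {ξ | ∃ x ∈ {ζ | ∃ u ∈ QSTL.NSat φ, ∃ v ∈ QSTL.Theta ψ, ζ = QSTL.conj u v},
           ∃ y ∈ {ζ | ∃ u ∈ QSTL.Theta φ, ∃ v ∈ QSTL.Theta ψ, ζ = QSTL.conj u v},
           ξ = QSTL.untl a b h x y}
      ∪ {ξ | ∃ x ∈ QSTL.Theta φ, ∃ y ∈ QSTL.Theta ψ, ξ = QSTL.conj x y}
  | .always a b h φ => {ξ | ∃ x ∈ QSTL.Theta φ, ξ = QSTL.eventually a b h x}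
  | .eventually a b h φ => {ξ | ∃ x ∈ QSTL.Theta φ, ξ = QSTL.always a b h x}
  | .next φ => {ξ | ∃ x ∈ QSTL.Theta φ, ξ = QSTL.next x}

/-- `NSat Φ` (written `N(Φ)` in the paper): the set of formulas describing
different ways of satisfying `Φ`. -/
def QSTL.NSat {S : Type} : QSTL S → Set (QSTL S)
  | .atom g => {QSTL.atom g}
  | .conj φ ψ => {ξ | ∃ x ∈ QSTL.NSat φ, ∃ y ∈ QSTL.NSat ψ, ξ = QSTL.conj x y}
  | .disj φ ψ => QSTL.NSat φ ∪ QSTL.NSat ψ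
  | .neg φ => QSTL.Theta φ
  | .untl a b h φ ψ =>
      {ξ | ∃ x ∈ QSTL.NSat φ, ∃ y ∈ QSTL.NSat ψ, ξ = QSTL.untl a b h x y}
  | .always a b h φ => {ξ | ∃ x ∈ QSTL.NSat φ, ξ = QSTL.always a b h x}
  | .eventually a b h φ => {ξ | ∃ x ∈ QSTL.NSat φ, ξ = QSTL.eventually a b h x}
  | .next φ => {ξ | ∃ x ∈ QSTL.NSat φ, ξ = QSTL.next x}
end

lemma fuzzing_key {S : Type} (π : ℕ → S) (Φ : QSTL S) :
    (∀ ξ ∈ QSTL.Theta Φ, ∀ t, 0 < QSTL.rho π ξ t → ¬ QSTL.Sat π t Φ) ∧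
    (∀ ξ ∈ QSTL.NSat Φ, ∀ t, 0 < QSTL.rho π ξ t → QSTL.Sat π t Φ) := by
  induction Φ with
  | atom g =>
    constructor
    · intro ξ hξ t h
      simp only [QSTL.Theta, Set.mem_singleton_iff] at hξ
      subst hξ
      simp only [QSTL.rho] at h
      simp only [QSTL.Sat, gt_iff_lt, not_lt]
      linarith
    · intro ξ hξ t h
      simp only [QSTL.NSat, Set.mem_singleton_iff] at hξ
      subst hξ
      simp only [QSTL.rho] at h
      simpa [QSTL.Sat] using h
  | neg φ ih =>
    constructor
    · intro ξ hξ t h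
      simp only [QSTL.Theta] at hξ
      have := ih.2 ξ hξ t h
      simp only [QSTL.Sat, not_not]
      exact this
    · intro ξ hξ t h
      simp only [QSTL.NSat] at hξ
      have := ih.1 ξ hξ t h
      simpa [QSTL.Sat] using this
  | conj φ ψ ihφ ihψ =>
    constructor
    · intro ξ hξ t h
      simp only [QSTL.Theta, Set.mem_union] at hξ
      rcases hξ with hξ | hξ
      · intro hsat
        simp only [QSTL.Sat] at hsat
        exact ihφ.1 ξ hξ t h hsat.1
      · intro hsat
        simp only [QSTL.Sat] at hsat
        exact ihψ.1 ξ hξ t h hsat.2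
    · intro ξ hξ t h
      simp only [QSTL.NSat, Set.mem_setOf_eq] at hξ
      obtain ⟨x, hx, y, hy, rfl⟩ := hξ
      simp only [QSTL.rho, lt_min_iff] at h
      exact ⟨ihφ.2 x hx t h.1, ihψ.2 y hy t h.2⟩
  | disj φ ψ ihφ ihψ =>
    constructor
    · intro ξ hξ t h
      simp only [QSTL.Theta, Set.mem_setOf_eq] at hξ
      obtain ⟨x, hx, y, hy, rfl⟩ := hξ
      simp only [QSTL.rho, lt_min_iff] at h
      intro hsat
      simp only [QSTL.Sat] at hsat
      rcases hsat with hs | hs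
      · exact ihφ.1 x hx t h.1 hs
      · exact ihψ.1 y hy t h.2 hs
    · intro ξ hξ t h
      simp only [QSTL.NSat, Set.mem_union] at hξ
      rcases hξ with hξ | hξ
      · exact Or.inl (ihφ.2 ξ hξ t h)
      · exact Or.inr (ihψ.2 ξ hξ t h)
  | untl a b hab φ ψ ihφ ihψ =>
    constructor
    · intro ξ hξ t h
      simp only [QSTL.Theta, Set.mem_union, Set.mem_setOf_eq] at hξ
      rcases hξ with ⟨x, ⟨u, hu, v, hv, rfl⟩, y, ⟨p, hp, q, hq, rfl⟩, rfl⟩ |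
        ⟨x, hx, y, hy, rfl⟩
      · -- the until part of Θ: derive a contradiction at the witness t'
        simp only [QSTL.rho] at h
        rw [Finset.lt_sup'_iff] at h
        obtain ⟨t', _, ht'⟩ := h
        rw [lt_min_iff] at ht'
        obtain ⟨hy', hinf⟩ := ht'
        have hmem := Finset.mem_Icc.mp t'.2
        have ht : t ≤ t'.1 := le_trans (Nat.le_add_right t a) hmem.1
        rw [Finset.lt_inf'_iff] at hinf
        have hx' := hinf t'.1 (Finset.mem_Icc.mpr ⟨ht, le_rfl⟩)
        simp only [QSTL.rho, lt_min_iff] at hx' hy'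
        have hSatφ : QSTL.Sat π t'.1 φ := ihφ.2 u hu t'.1 hx'.1
        have hNotφ : ¬ QSTL.Sat π t'.1 φ := ihφ.1 p hp t'.1 hy'.1
        exact absurd hSatφ hNotφ
      · -- the conj part of Θ
        simp only [QSTL.rho, lt_min_iff] at h
        intro hsat
        simp only [QSTL.Sat] at hsat
        obtain ⟨s, hs1, hs2, hψs, hall⟩ := hsat
        have ht : t ≤ s := le_trans (Nat.le_add_right t a) hs1
        exact ihφ.1 x hx t h.1 (hall t le_rfl ht)
    · intro ξ hξ t h
      simp only [QSTL.NSat, Set.mem_setOf_eq] at hξ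
      obtain ⟨x, hx, y, hy, rfl⟩ := hξ
      simp only [QSTL.rho] at h
      rw [Finset.lt_sup'_iff] at h
      obtain ⟨t', _, ht'⟩ := h
      rw [lt_min_iff] at ht'
      obtain ⟨hy', hinf⟩ := ht'
      rw [Finset.lt_inf'_iff] at hinf
      have hmem := Finset.mem_Icc.mp t'.2
      refine ⟨t'.1, hmem.1, hmem.2, ihψ.2 y hy t'.1 hy', ?_⟩
      intro t'' h1 h2
      exact ihφ.2 x hx t'' (hinf t'' (Finset.mem_Icc.mpr ⟨h1, h2⟩))
  | always a b hab φ ih =>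
    constructor
    · intro ξ hξ t h
      simp only [QSTL.Theta, Set.mem_setOf_eq] at hξ
      obtain ⟨x, hx, rfl⟩ := hξ
      simp only [QSTL.rho] at h
      rw [Finset.lt_sup'_iff] at h
      obtain ⟨t', ht'mem, ht'⟩ := h
      have hmem := Finset.mem_Icc.mp ht'mem
      intro hsat
      exact ih.1 x hx t' ht' (hsat t' hmem.1 hmem.2)
    · intro ξ hξ t h
      simp only [QSTL.NSat, Set.mem_setOf_eq] at hξ
      obtain ⟨x, hx, rfl⟩ := hξ
      simp only [QSTL.rho] at h
      rw [Finset.lt_inf'_iff] at h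
      intro t' h1 h2
      exact ih.2 x hx t' (h t' (Finset.mem_Icc.mpr ⟨h1, h2⟩))
  | eventually a b hab φ ih =>
    constructor
    · intro ξ hξ t h
      simp only [QSTL.Theta, Set.mem_setOf_eq] at hξ
      obtain ⟨x, hx, rfl⟩ := hξ
      simp only [QSTL.rho] at h
      rw [Finset.lt_inf'_iff] at h
      intro hsat
      simp only [QSTL.Sat] at hsat
      obtain ⟨t', h1, h2, hs⟩ := hsat
      exact ih.1 x hx t' (h t' (Finset.mem_Icc.mpr ⟨h1, h2⟩)) hs
    · intro ξ hξ t h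
      simp only [QSTL.NSat, Set.mem_setOf_eq] at hξ
      obtain ⟨x, hx, rfl⟩ := hξ
      simp only [QSTL.rho] at h
      rw [Finset.lt_sup'_iff] at h
      obtain ⟨t', ht'mem, ht'⟩ := h
      have hmem := Finset.mem_Icc.mp ht'mem
      exact ⟨t', hmem.1, hmem.2, ih.2 x hx t' ht'⟩
  | next φ ih =>
    constructor
    · intro ξ hξ t h
      simp only [QSTL.Theta, Set.mem_setOf_eq] at hξ
      obtain ⟨x, hx, rfl⟩ := hξ
      simp only [QSTL.rho] at h
      exact ih.1 x hx (t + 1) h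
    · intro ξ hξ t h
      simp only [QSTL.NSat, Set.mem_setOf_eq] at hξ
      obtain ⟨x, hx, rfl⟩ := hξ
      simp only [QSTL.rho] at h
      exact ih.2 x hx (t + 1) h

/-- Correctness of the fuzzing engine's violation check: a strictly positive
robustness score for any member of `Θ(Φ)` certifies that the trace violates
the traffic law `Φ`. -/
theorem fuzzing_check_correct {S : Type} (Φ : QSTL S) (π : ℕ → S) (ξ : QSTL S)
    (hξ : ξ ∈ QSTL.Theta Φ) (h : QSTL.rho π ξ 0 > 0) : ¬ QSTL.Sat π 0 Φ := by
  exact (fuzzing_key π Φ).1 ξ hξ 0 h
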